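/- A permutation is in Av(231, 312, 4321, 21543) if and only if it has the form π ⊕ σ ⊕ τ, where π is an increasing (possibly empty) permutation, σ is either empty or equal to 321, and τ is a permutation avoiding 231, 312, and 321 (a Fibonacci permutation). -/

import Mathlib

open Finset MvPolynomial
open scoped Classical

/-- `π` contains the pattern given by the list `p` (one-line notation). -/
def ContainsPat {n : ℕ} (π : Equiv.Perm (Fin n)) (p : List ℕ) : Prop :=
  ∃ f : Fin p.length → Fin n, StrictMono f ∧
    ∀ i j : Fin p.length, p.get i < p.get j ↔ π (f i) < π (f j)

/-- `π` avoids every pattern in the list `S`. -/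
def AvoidsAll {n : ℕ} (π : Equiv.Perm (Fin n)) (S : List (List ℕ)) : Prop :=
  ∀ p ∈ S, ¬ ContainsPat π p

/-- Fibonacci numbers with the convention `F 0 = F 1 = 1`. -/
def fib' : ℕ → ℕ
  | 0 => 1
  | 1 => 1
  | n + 2 => fib' (n + 1) + fib' n

/-- number of inversions -/
def invNum {n : ℕ} (π : Equiv.Perm (Fin n)) : ℕ :=
  (Finset.univ.filter (fun p : Fin n × Fin n => p.1 < p.2 ∧ π p.2 < π p.1)).card

/-- The last `k` entries of `π` contain pattern `p`. -/
def SegContainsPat {n : ℕ} (π : Equiv.Perm (Fin n)) (k : ℕ) (p : List ℕ) : Prop :=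
  ∃ f : Fin p.length → Fin n, StrictMono f ∧ (∀ i, n - k ≤ ((f i : Fin n) : ℕ)) ∧
    ∀ i j : Fin p.length, p.get i < p.get j ↔ π (f i) < π (f j)

/-- The last `k` entries of `π` are the top `k` values and form a Fibonacci permutation. -/
def IsFinalFib {n : ℕ} (π : Equiv.Perm (Fin n)) (k : ℕ) : Prop :=
  k ≤ n ∧ (∀ i : Fin n, n - k ≤ (i : ℕ) → n - k ≤ ((π i : Fin n) : ℕ)) ∧
    ∀ p ∈ [[2,3,1],[3,1,2],[3,2,1]], ¬ SegContainsPat π k p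

/-- `Fib(π)`: length of the longest final segment of `π` consisting of the top values
and avoiding 231, 312, 321. -/
noncomputable def fibStat {n : ℕ} (π : Equiv.Perm (Fin n)) : ℕ := sSup {k | IsFinalFib π k}

/-- direct sum `π ⊕ σ` -/
def dsum {m n : ℕ} (π : Equiv.Perm (Fin m)) (σ : Equiv.Perm (Fin n)) :
    Equiv.Perm (Fin (m + n)) :=
  finSumFinEquiv.symm.trans ((Equiv.sumCongr π σ).trans finSumFinEquiv)

/-- skew sum `π ⊖ σ` -/
def sskew {m n : ℕ} (π : Equiv.Perm (Fin m)) (σ : Equiv.Perm (Fin n)) :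
    Equiv.Perm (Fin (m + n)) :=
  finSumFinEquiv.symm.trans ((Equiv.sumCongr π σ).trans
    ((Equiv.sumComm (Fin m) (Fin n)).trans (finSumFinEquiv.trans (finCongr (Nat.add_comm n m)))))

/-- the pattern 321 as a permutation of `Fin 3` -/
def perm321 : Equiv.Perm (Fin 3) := Fin.revPerm

/-- the pattern 312 as a permutation of `Fin 3` -/
def perm312 : Equiv.Perm (Fin 3) := (finRotate 3)⁻¹

/-- binomial coefficient on ℤ, zero when undefined -/
def C (a b : ℤ) : ℤ := if 0 ≤ b ∧ b ≤ a then (a.toNat.choose b.toNat : ℤ) else 0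

/-- generating function `G_n(v,q)` with `v = X 0`, `q = X 1` -/
noncomputable def G (n : ℕ) (S : List (List ℕ)) : MvPolynomial (Fin 2) ℤ :=
  ∑ π ∈ Finset.univ.filter (fun π : Equiv.Perm (Fin n) => AvoidsAll π S),
    X 0 ^ fibStat π * X 1 ^ invNum π

/-- Fibonacci generating function `F_n(q)` with `q = X 1` -/
noncomputable def Fq (n : ℕ) : MvPolynomial (Fin 2) ℤ :=
  ∑ π ∈ Finset.univ.filter
      (fun π : Equiv.Perm (Fin n) => AvoidsAll π [[2,3,1],[3,1,2],[3,2,1]]),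
    X 1 ^ invNum π

set_option maxRecDepth 10000

section Patterns
variable {n : ℕ} (π : Equiv.Perm (Fin n))

lemma pat231_iff : ContainsPat π [2,3,1] ↔
    ∃ x y z : Fin n, x < y ∧ y < z ∧ π z < π x ∧ π x < π y := by
  constructor
  · rintro ⟨f, hm, hp⟩
    exact ⟨f ⟨0, by norm_num⟩, f ⟨1, by norm_num⟩, f ⟨2, by norm_num⟩,
      hm (by decide), hm (by decide),
      (hp ⟨2, by norm_num⟩ ⟨0, by norm_num⟩).mp (by decide),
      (hp ⟨0, by norm_num⟩ ⟨1, by norm_num⟩).mp (by decide)⟩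
  · rintro ⟨x, y, z, h1, h2, h3, h4⟩
    have e0 : (x:ℕ) < y := h1
    have e0' : (y:ℕ) < z := h2
    have e1 : (π x : ℕ) < π y := h4
    have e2 : (π z : ℕ) < π x := h3
    refine ⟨![x, y, z], ?_, ?_⟩
    · rw [Fin.strictMono_iff_lt_succ]
      intro i; fin_cases i <;> simpa
    · intro i j
      fin_cases i <;> fin_cases j <;>
        simp only [show ((⟨2, by norm_num⟩ : Fin 3) = 2) from rfl, List.get,
          Matrix.cons_val_zero, Matrix.cons_val_one, Matrix.head_cons,
          Matrix.cons_val_two, Matrix.tail_cons, Fin.mk_zero, Fin.mk_one, Fin.lt_def] <;>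
        omega

lemma pat312_iff : ContainsPat π [3,1,2] ↔
    ∃ x y z : Fin n, x < y ∧ y < z ∧ π y < π z ∧ π z < π x := by
  constructor
  · rintro ⟨f, hm, hp⟩
    exact ⟨f ⟨0, by norm_num⟩, f ⟨1, by norm_num⟩, f ⟨2, by norm_num⟩,
      hm (by decide), hm (by decide),
      (hp ⟨1, by norm_num⟩ ⟨2, by norm_num⟩).mp (by decide),
      (hp ⟨2, by norm_num⟩ ⟨0, by norm_num⟩).mp (by decide)⟩
  · rintro ⟨x, y, z, h1, h2, h3, h4⟩
    have e0 : (x:ℕ) < y := h1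
    have e0' : (y:ℕ) < z := h2
    have e1 : (π y : ℕ) < π z := h3
    have e2 : (π z : ℕ) < π x := h4
    refine ⟨![x, y, z], ?_, ?_⟩
    · rw [Fin.strictMono_iff_lt_succ]
      intro i; fin_cases i <;> simpa
    · intro i j
      fin_cases i <;> fin_cases j <;>
        simp only [show ((⟨2, by norm_num⟩ : Fin 3) = 2) from rfl, List.get,
          Matrix.cons_val_zero, Matrix.cons_val_one, Matrix.head_cons,
          Matrix.cons_val_two, Matrix.tail_cons, Fin.mk_zero, Fin.mk_one, Fin.lt_def] <;>
        omega

lemma pat321_iff : ContainsPat π [3,2,1] ↔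
    ∃ x y z : Fin n, x < y ∧ y < z ∧ π z < π y ∧ π y < π x := by
  constructor
  · rintro ⟨f, hm, hp⟩
    exact ⟨f ⟨0, by norm_num⟩, f ⟨1, by norm_num⟩, f ⟨2, by norm_num⟩,
      hm (by decide), hm (by decide),
      (hp ⟨2, by norm_num⟩ ⟨1, by norm_num⟩).mp (by decide),
      (hp ⟨1, by norm_num⟩ ⟨0, by norm_num⟩).mp (by decide)⟩
  · rintro ⟨x, y, z, h1, h2, h3, h4⟩
    have e0 : (x:ℕ) < y := h1
    have e0' : (y:ℕ) < z := h2
    have e1 : (π z : ℕ) < π y := h3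
    have e2 : (π y : ℕ) < π x := h4
    refine ⟨![x, y, z], ?_, ?_⟩
    · rw [Fin.strictMono_iff_lt_succ]
      intro i; fin_cases i <;> simpa
    · intro i j
      fin_cases i <;> fin_cases j <;>
        simp only [show ((⟨2, by norm_num⟩ : Fin 3) = 2) from rfl, List.get,
          Matrix.cons_val_zero, Matrix.cons_val_one, Matrix.head_cons,
          Matrix.cons_val_two, Matrix.tail_cons, Fin.mk_zero, Fin.mk_one, Fin.lt_def] <;>
        omega

lemma pat4321_iff : ContainsPat π [4,3,2,1] ↔
    ∃ w x y z : Fin n, w < x ∧ x < y ∧ y < z ∧ π z < π y ∧ π y < π x ∧ π x < π w := by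
  constructor
  · rintro ⟨f, hm, hp⟩
    exact ⟨f ⟨0, by norm_num⟩, f ⟨1, by norm_num⟩, f ⟨2, by norm_num⟩, f ⟨3, by norm_num⟩,
      hm (by decide), hm (by decide), hm (by decide),
      (hp ⟨3, by norm_num⟩ ⟨2, by norm_num⟩).mp (by decide),
      (hp ⟨2, by norm_num⟩ ⟨1, by norm_num⟩).mp (by decide),
      (hp ⟨1, by norm_num⟩ ⟨0, by norm_num⟩).mp (by decide)⟩
  · rintro ⟨w, x, y, z, h1, h2, h3, h4, h5, h6⟩
    have e0 : (w:ℕ) < x := h1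
    have e0' : (x:ℕ) < y := h2
    have e0'' : (y:ℕ) < z := h3
    have e1 : (π z : ℕ) < π y := h4
    have e2 : (π y : ℕ) < π x := h5
    have e3 : (π x : ℕ) < π w := h6
    refine ⟨![w, x, y, z], ?_, ?_⟩
    · rw [Fin.strictMono_iff_lt_succ]
      intro i; fin_cases i <;> simpa
    · intro i j
      fin_cases i <;> fin_cases j <;>
        simp only [show ((⟨2, by norm_num⟩ : Fin 4) = 2) from rfl,
          show ((⟨3, by norm_num⟩ : Fin 4) = 3) from rfl, List.get,
          Matrix.cons_val_zero, Matrix.cons_val_one, Matrix.head_cons,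
          Matrix.cons_val_two, Matrix.cons_val_three, Matrix.tail_cons,
          Fin.mk_zero, Fin.mk_one, Fin.lt_def] <;>
        omega

lemma pat21543_iff : ContainsPat π [2,1,5,4,3] ↔
    ∃ v w x y z : Fin n, v < w ∧ w < x ∧ x < y ∧ y < z ∧
      π w < π v ∧ π v < π z ∧ π z < π y ∧ π y < π x := by
  constructor
  · rintro ⟨f, hm, hp⟩
    exact ⟨f ⟨0, by norm_num⟩, f ⟨1, by norm_num⟩, f ⟨2, by norm_num⟩, f ⟨3, by norm_num⟩,
      f ⟨4, by norm_num⟩,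
      hm (by decide), hm (by decide), hm (by decide), hm (by decide),
      (hp ⟨1, by norm_num⟩ ⟨0, by norm_num⟩).mp (by decide),
      (hp ⟨0, by norm_num⟩ ⟨4, by norm_num⟩).mp (by decide),
      (hp ⟨4, by norm_num⟩ ⟨3, by norm_num⟩).mp (by decide),
      (hp ⟨3, by norm_num⟩ ⟨2, by norm_num⟩).mp (by decide)⟩
  · rintro ⟨v, w, x, y, z, h1, h2, h3, h4, h5, h6, h7, h8⟩
    have e0 : (v:ℕ) < w := h1
    have e0' : (w:ℕ) < x := h2
    have e0'' : (x:ℕ) < y := h3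
    have e0''' : (y:ℕ) < z := h4
    have e1 : (π w : ℕ) < π v := h5
    have e2 : (π v : ℕ) < π z := h6
    have e3 : (π z : ℕ) < π y := h7
    have e4 : (π y : ℕ) < π x := h8
    refine ⟨![v, w, x, y, z], ?_, ?_⟩
    · rw [Fin.strictMono_iff_lt_succ]
      intro i; fin_cases i <;> simpa
    · intro i j
      fin_cases i <;> fin_cases j <;>
        simp only [show ((⟨2, by norm_num⟩ : Fin 5) = 2) from rfl,
          show ((⟨3, by norm_num⟩ : Fin 5) = 3) from rfl,
          show ((⟨4, by norm_num⟩ : Fin 5) = 4) from rfl, List.get,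
          Matrix.cons_val_zero, Matrix.cons_val_one, Matrix.head_cons,
          Matrix.cons_val_two, Matrix.cons_val_three, Matrix.cons_val_four,
          Matrix.tail_cons, Fin.mk_zero, Fin.mk_one, Fin.lt_def] <;>
        omega

end Patterns

section Conds
variable {n : ℕ} (π : Equiv.Perm (Fin n))

def Cond1 : Prop :=
  ∀ i j k : Fin n, i < j → π j < π i → i ≤ k → k ≤ j → (π k : ℕ) + ((k:ℕ) - (i:ℕ)) = π i

def Cond2 : Prop := ∀ i j : Fin n, i < j → π j < π i → (j:ℕ) ≤ (i:ℕ) + 2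

def Cond2' : Prop := ∀ i j : Fin n, i < j → π j < π i → (j:ℕ) ≤ (i:ℕ) + 1

def Cond3 : Prop := ∀ i j k l : Fin n, i < j → π j < π i → k < l → π l < π k →
    (j:ℕ) < (k:ℕ) → (l:ℕ) ≤ (k:ℕ) + 1

variable {π}

lemma val_eq_card (x : Fin n) :
    ((π x : ℕ)) = (univ.filter fun y => π y < π x).card := by
  have h : (univ.filter fun y : Fin n => π y < π x)
      = (Finset.Iio (π x)).map π.symm.toEmbedding := by
    ext y
    simp [Equiv.symm_apply_eq]
  rw [h, Finset.card_map, Fin.card_Iio]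

lemma eq_self_of (x : Fin n) (hx : ∀ y, π y < π x ↔ y < x) : (π x : ℕ) = x := by
  rw [val_eq_card x]
  have h : (univ.filter fun y : Fin n => π y < π x) = Finset.Iio x := by
    ext y; simp [hx y]
  rw [h, Fin.card_Iio]

lemma flip_lt {x y : Fin n} (hne : x ≠ y) (h : ¬ π x < π y) : π y < π x := by
  rcases lt_or_ge (π y) (π x) with h' | h'
  · exact h'
  · exact absurd (π.injective (le_antisymm (not_lt.mp h) h')).symm hne

end Conds

section Main
variable {n : ℕ} {π : Equiv.Perm (Fin n)}

lemma between (h231 : ¬ ContainsPat π [2,3,1]) (h312 : ¬ ContainsPat π [3,1,2])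
    {i j k : Fin n} (hik : i < k) (hkj : k < j) (hinv : π j < π i) :
    π j < π k ∧ π k < π i := by
  constructor
  · by_contra hc
    have h1 : π k < π j := flip_lt (ne_of_lt hkj).symm hc
    exact h312 ((pat312_iff π).mpr ⟨i, k, j, hik, hkj, h1, hinv⟩)
  · by_contra hc
    have h1 : π i < π k := flip_lt (ne_of_lt hik).symm hc
    exact h231 ((pat231_iff π).mpr ⟨i, k, j, hik, hkj, hinv, h1⟩)

lemma decr (h231 : ¬ ContainsPat π [2,3,1]) (h312 : ¬ ContainsPat π [3,1,2])
    {i j k l : Fin n} (hij : i < j) (hinv : π j < π i)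
    (hik : i ≤ k) (hkl : k < l) (hlj : l ≤ j) : π l < π k := by
  by_contra hc
  have h1 : π k < π l := flip_lt (ne_of_lt hkl).symm hc
  have hjk : π j < π k := by
    rcases eq_or_lt_of_le hik with h | h
    · exact h ▸ hinv
    · exact (between h231 h312 h (lt_of_lt_of_le hkl hlj) hinv).1
  rcases eq_or_lt_of_le hlj with h | h
  · exact absurd (h ▸ h1) (lt_asymm hjk)
  · exact h231 ((pat231_iff π).mpr ⟨k, l, j, hkl, h, hjk, h1⟩)

lemma outside_lo (h231 : ¬ ContainsPat π [2,3,1])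
    {i j m : Fin n} (hmi : m < i) (hij : i < j) (hinv : π j < π i) :
    π m < π j ∨ π i < π m := by
  by_contra hc
  push_neg at hc
  have h1 : π j < π m := flip_lt (ne_of_lt (hmi.trans hij)) (not_lt.mpr hc.1)
  have h2 : π m < π i := flip_lt (ne_of_lt hmi).symm (not_lt.mpr hc.2)
  exact h231 ((pat231_iff π).mpr ⟨m, i, j, hmi, hij, h1, h2⟩)

lemma outside_hi (h312 : ¬ ContainsPat π [3,1,2])
    {i j m : Fin n} (hij : i < j) (hjm : j < m) (hinv : π j < π i) :
    π m < π j ∨ π i < π m := by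
  by_contra hc
  push_neg at hc
  have h1 : π j < π m := flip_lt (ne_of_lt hjm).symm (not_lt.mpr hc.1)
  have h2 : π m < π i := flip_lt (ne_of_lt (hij.trans hjm)) (not_lt.mpr hc.2)
  exact h312 ((pat312_iff π).mpr ⟨i, j, m, hij, hjm, h1, h2⟩)

lemma inv_diff (h231 : ¬ ContainsPat π [2,3,1]) (h312 : ¬ ContainsPat π [3,1,2])
    {i j : Fin n} (hij : i < j) (hinv : π j < π i) :
    ((π j : ℕ)) + ((j:ℕ) - (i:ℕ)) = π i := by
  have hmap : (univ.filter fun y => π j ≤ π y ∧ π y ≤ π i)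
      = (Finset.Icc (π j) (π i)).map π.symm.toEmbedding := by
    ext y
    simp [Equiv.symm_apply_eq]
  have hset : (univ.filter fun y => π j ≤ π y ∧ π y ≤ π i) = Finset.Icc i j := by
    ext y
    simp only [Finset.mem_filter, Finset.mem_univ, true_and, Finset.mem_Icc]
    constructor
    · rintro ⟨h1, h2⟩
      constructor
      · by_contra hc
        rcases outside_lo h231 (not_le.mp hc) hij hinv with h | h
        · exact absurd h1 (not_le.mpr h)
        · exact absurd h2 (not_le.mpr h)
      · by_contra hc
        rcases outside_hi h312 hij (not_le.mp hc) hinv with h | h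
        · exact absurd h1 (not_le.mpr h)
        · exact absurd h2 (not_le.mpr h)
    · rintro ⟨h1, h2⟩
      rcases eq_or_lt_of_le h1 with h | h
      · exact ⟨h ▸ le_of_lt hinv, h ▸ le_refl _⟩
      rcases eq_or_lt_of_le h2 with h' | h'
      · exact ⟨h' ▸ le_refl _, h' ▸ le_of_lt hinv⟩
      · have := between h231 h312 h h' hinv
        exact ⟨le_of_lt this.1, le_of_lt this.2⟩
  have hcard : (Finset.Icc i j).card = (Finset.Icc (π j) (π i)).card := by
    rw [← hset, hmap, Finset.card_map]
  rw [Fin.card_Icc, Fin.card_Icc] at hcard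
  have e1 : (i:ℕ) < j := hij
  have e2 : (π j : ℕ) < π i := hinv
  omega

lemma cond1_of (h231 : ¬ ContainsPat π [2,3,1]) (h312 : ¬ ContainsPat π [3,1,2]) :
    Cond1 π := by
  intro i j k hij hinv hik hkj
  rcases eq_or_lt_of_le hik with h | h
  · have : (k:ℕ) = i := by rw [← h]
    rw [← h]
    omega
  rcases eq_or_lt_of_le hkj with h' | h'
  · rw [h']
    exact inv_diff h231 h312 hij hinv
  · have hb := between h231 h312 h h' hinv
    exact inv_diff h231 h312 h hb.2

lemma cond2_of (h4321 : ¬ ContainsPat π [4,3,2,1]) (hc1 : Cond1 π) : Cond2 π := by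
  intro i j hij hinv
  by_contra hc
  push_neg at hc
  have hjn : (j:ℕ) < n := j.isLt
  have hij' : (i:ℕ) < j := hij
  set x1 : Fin n := ⟨(i:ℕ)+1, by omega⟩ with hx1
  set x2 : Fin n := ⟨(i:ℕ)+2, by omega⟩ with hx2
  set x3 : Fin n := ⟨(i:ℕ)+3, by omega⟩ with hx3
  have v1 := hc1 i j x1 hij hinv (by rw [Fin.le_def]; simp [hx1]) (by rw [Fin.le_def]; simp [hx1]; omega)
  have v2 := hc1 i j x2 hij hinv (by rw [Fin.le_def]; simp [hx2]) (by rw [Fin.le_def]; simp [hx2]; omega)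
  have v3 := hc1 i j x3 hij hinv (by rw [Fin.le_def]; simp [hx3]) (by rw [Fin.le_def]; simp [hx3]; omega)
  have e1 : (x1:ℕ) = (i:ℕ)+1 := rfl
  have e2 : (x2:ℕ) = (i:ℕ)+2 := rfl
  have e3 : (x3:ℕ) = (i:ℕ)+3 := rfl
  apply h4321
  rw [pat4321_iff]
  refine ⟨i, x1, x2, x3, ?_, ?_, ?_, ?_, ?_, ?_⟩ <;> rw [Fin.lt_def] <;> omega

lemma cond3_of (h21543 : ¬ ContainsPat π [2,1,5,4,3]) (hc1 : Cond1 π) (hc2 : Cond2 π) :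
    Cond3 π := by
  intro i j k l hij hinv hkl hinv2 hjk
  by_contra hc
  push_neg at hc
  have hln : (l:ℕ) < n := l.isLt
  have hkl' : (k:ℕ) < l := hkl
  have hij' : (i:ℕ) < j := hij
  set y : Fin n := ⟨(k:ℕ)+1, by omega⟩ with hy
  set z : Fin n := ⟨(k:ℕ)+2, by omega⟩ with hz
  have vy := hc1 k l y hkl hinv2 (by rw [Fin.le_def]; simp [hy]) (by rw [Fin.le_def]; simp [hy]; omega)
  have vz := hc1 k l z hkl hinv2 (by rw [Fin.le_def]; simp [hz]) (by rw [Fin.le_def]; simp [hz]; omega)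
  have ey : (y:ℕ) = (k:ℕ)+1 := rfl
  have ez : (z:ℕ) = (k:ℕ)+2 := rfl
  have hiz : π i < π z := by
    by_contra hcc
    have h1 : π z < π i := flip_lt (by rw [ne_eq, Fin.ext_iff]; omega) hcc
    have := hc2 i z (by rw [Fin.lt_def]; omega) h1
    omega
  have hinv' : (π j : ℕ) < π i := hinv
  have hiz' : (π i : ℕ) < π z := hiz
  apply h21543
  rw [pat21543_iff]
  refine ⟨i, j, k, y, z, by rw [Fin.lt_def]; omega, by rw [Fin.lt_def]; omega,
    by rw [Fin.lt_def]; omega, by rw [Fin.lt_def]; omega, hinv, hiz, ?_, ?_⟩ <;>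
    rw [Fin.lt_def] <;> omega

lemma cond2'_of (h321 : ¬ ContainsPat π [3,2,1]) (hc1 : Cond1 π) : Cond2' π := by
  intro i j hij hinv
  by_contra hc
  push_neg at hc
  have hjn : (j:ℕ) < n := j.isLt
  have hij' : (i:ℕ) < j := hij
  set y : Fin n := ⟨(i:ℕ)+1, by omega⟩ with hy
  have vy := hc1 i j y hij hinv (by rw [Fin.le_def]; simp [hy]) (by rw [Fin.le_def]; simp [hy]; omega)
  have vj := hc1 i j j hij hinv (le_of_lt hij) (le_refl _)
  have ey : (y:ℕ) = (i:ℕ)+1 := rfl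
  apply h321
  rw [pat321_iff]
  exact ⟨i, y, j, by rw [Fin.lt_def]; omega, by rw [Fin.lt_def]; omega,
    by rw [Fin.lt_def]; omega, by rw [Fin.lt_def]; omega⟩

lemma no231_of (hc1 : Cond1 π) : ¬ ContainsPat π [2,3,1] := by
  rw [pat231_iff]
  rintro ⟨x, y, z, h1, h2, h3, h4⟩
  have := hc1 x z y (h1.trans h2) h3 (le_of_lt h1) (le_of_lt h2)
  have e1 : (x:ℕ) < y := h1
  have e4 : (π x : ℕ) < π y := h4
  omega

lemma no312_of (hc1 : Cond1 π) : ¬ ContainsPat π [3,1,2] := by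
  rw [pat312_iff]
  rintro ⟨x, y, z, h1, h2, h3, h4⟩
  have hy := hc1 x z y (h1.trans h2) h4 (le_of_lt h1) (le_of_lt h2)
  have hz := hc1 x z z (h1.trans h2) h4 (le_of_lt (h1.trans h2)) (le_refl _)
  have e1 : (x:ℕ) < y := h1
  have e2 : (y:ℕ) < z := h2
  have e3 : (π y : ℕ) < π z := h3
  omega

lemma avoids_iff_conds : AvoidsAll π [[2,3,1],[3,1,2],[4,3,2,1],[2,1,5,4,3]] ↔
    Cond1 π ∧ Cond2 π ∧ Cond3 π := by
  constructor
  · intro h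
    have h231 := h [2,3,1] (by simp)
    have h312 := h [3,1,2] (by simp)
    have h4321 := h [4,3,2,1] (by simp)
    have h21543 := h [2,1,5,4,3] (by simp)
    have hc1 := cond1_of h231 h312
    have hc2 := cond2_of h4321 hc1
    exact ⟨hc1, hc2, cond3_of h21543 hc1 hc2⟩
  · rintro ⟨hc1, hc2, hc3⟩
    intro p hp
    simp only [List.mem_cons, List.not_mem_nil, or_false] at hp
    rcases hp with rfl | rfl | rfl | rfl
    · exact no231_of hc1
    · exact no312_of hc1
    · rw [pat4321_iff]
      rintro ⟨w, x, y, z, h1, h2, h3, h4, h5, h6⟩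
      have := hc2 w z (h1.trans (h2.trans h3)) ((h4.trans h5).trans h6)
      have e1 : (w:ℕ) < x := h1
      have e2 : (x:ℕ) < y := h2
      have e3 : (y:ℕ) < z := h3
      omega
    · rw [pat21543_iff]
      rintro ⟨v, w, x, y, z, h1, h2, h3, h4, h5, h6, h7, h8⟩
      have := hc3 v w x z h1 h5 (h3.trans h4) ((h7.trans h8)) h2
      have e3 : (x:ℕ) < y := h3
      have e4 : (y:ℕ) < z := h4
      omega

lemma avoids_iff_conds' : AvoidsAll π [[2,3,1],[3,1,2],[3,2,1]] ↔
    Cond1 π ∧ Cond2' π := by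
  constructor
  · intro h
    have h231 := h [2,3,1] (by simp)
    have h312 := h [3,1,2] (by simp)
    have h321 := h [3,2,1] (by simp)
    have hc1 := cond1_of h231 h312
    exact ⟨hc1, cond2'_of h321 hc1⟩
  · rintro ⟨hc1, hc2⟩
    intro p hp
    simp only [List.mem_cons, List.not_mem_nil, or_false] at hp
    rcases hp with rfl | rfl | rfl
    · exact no231_of hc1
    · exact no312_of hc1
    · rw [pat321_iff]
      rintro ⟨x, y, z, h1, h2, h3, h4⟩
      have := hc2 x z (h1.trans h2) (h3.trans h4)
      have e1 : (x:ℕ) < y := h1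
      have e2 : (y:ℕ) < z := h2
      omega

end Main

section Vals

lemma dsum_val_lt {m k : ℕ} (π : Equiv.Perm (Fin m)) (σ : Equiv.Perm (Fin k))
    (x : Fin (m+k)) (t : Fin m) (ht : (x:ℕ) = (t:ℕ)) : ((dsum π σ) x : ℕ) = π t := by
  have hx : x = Fin.castAdd k t := by apply Fin.ext; simpa using ht
  rw [hx]
  simp [dsum]

lemma dsum_val_ge {m k : ℕ} (π : Equiv.Perm (Fin m)) (σ : Equiv.Perm (Fin k))
    (x : Fin (m+k)) (t : Fin k) (ht : (x:ℕ) = m + (t:ℕ)) :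
    ((dsum π σ) x : ℕ) = m + σ t := by
  have hx : x = Fin.natAdd m t := by apply Fin.ext; simpa using ht
  rw [hx]
  simp [dsum]

lemma perm321_val (t : Fin 3) : (perm321 t : ℕ) = 2 - (t:ℕ) := by
  simp [perm321, Fin.rev]

lemma permCongr_val {M K : ℕ} (h : M = K) (q : Equiv.Perm (Fin M)) (x : Fin K)
    (t : Fin M) (ht : (x:ℕ) = (t:ℕ)) : (((finCongr h).permCongr q) x : ℕ) = q t := by
  subst h
  have : x = t := Fin.ext ht
  subst this
  simp

variable {a c K : ℕ}

lemma rho1_val_lt (h : a + c = K) (τ : Equiv.Perm (Fin c)) (x : Fin K) (hx : (x:ℕ) < a) :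
    (((finCongr h).permCongr (dsum (Equiv.refl (Fin a)) τ)) x : ℕ) = x := by
  rw [permCongr_val h _ x ⟨(x:ℕ), by omega⟩ rfl,
    dsum_val_lt _ _ _ ⟨(x:ℕ), hx⟩ rfl]
  simp

lemma rho1_val_ge (h : a + c = K) (τ : Equiv.Perm (Fin c)) (x : Fin K) (hx : a ≤ (x:ℕ)) :
    (((finCongr h).permCongr (dsum (Equiv.refl (Fin a)) τ)) x : ℕ)
      = a + τ ⟨(x:ℕ) - a, by omega⟩ := by
  rw [permCongr_val h _ x ⟨(x:ℕ), by omega⟩ rfl,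
    dsum_val_ge _ _ _ ⟨(x:ℕ) - a, by omega⟩ (by simp; omega)]

lemma rho2_val_lt (h : a + 3 + c = K) (τ : Equiv.Perm (Fin c)) (x : Fin K) (hx : (x:ℕ) < a) :
    (((finCongr h).permCongr (dsum (dsum (Equiv.refl (Fin a)) perm321) τ)) x : ℕ) = x := by
  rw [permCongr_val h _ x ⟨(x:ℕ), by omega⟩ rfl,
    dsum_val_lt _ _ _ ⟨(x:ℕ), by omega⟩ rfl,
    dsum_val_lt _ _ _ ⟨(x:ℕ), hx⟩ rfl]
  simp

lemma rho2_val_mid (h : a + 3 + c = K) (τ : Equiv.Perm (Fin c)) (x : Fin K)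
    (hx : a ≤ (x:ℕ)) (hx2 : (x:ℕ) < a + 3) :
    (((finCongr h).permCongr (dsum (dsum (Equiv.refl (Fin a)) perm321) τ)) x : ℕ)
      = a + (2 - ((x:ℕ) - a)) := by
  rw [permCongr_val h _ x ⟨(x:ℕ), by omega⟩ rfl,
    dsum_val_lt _ _ _ ⟨(x:ℕ), by omega⟩ rfl,
    dsum_val_ge _ _ _ ⟨(x:ℕ) - a, by omega⟩ (by simp; omega),
    perm321_val]

lemma rho2_val_ge (h : a + 3 + c = K) (τ : Equiv.Perm (Fin c)) (x : Fin K)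
    (hx : a + 3 ≤ (x:ℕ)) :
    (((finCongr h).permCongr (dsum (dsum (Equiv.refl (Fin a)) perm321) τ)) x : ℕ)
      = (a + 3) + τ ⟨(x:ℕ) - (a+3), by omega⟩ := by
  rw [permCongr_val h _ x ⟨(x:ℕ), by omega⟩ rfl,
    dsum_val_ge _ _ _ ⟨(x:ℕ) - (a+3), by omega⟩ (by simp; omega)]

end Vals

section RhoConds
variable {a c K : ℕ}

lemma rho1_conds (h : a + c = K) (τ : Equiv.Perm (Fin c))
    (ht1 : Cond1 τ) (ht2 : Cond2' τ) :
    Cond1 ((finCongr h).permCongr (dsum (Equiv.refl (Fin a)) τ))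
    ∧ Cond2 ((finCongr h).permCongr (dsum (Equiv.refl (Fin a)) τ))
    ∧ Cond3 ((finCongr h).permCongr (dsum (Equiv.refl (Fin a)) τ)) := by
  set ρ := (finCongr h).permCongr (dsum (Equiv.refl (Fin a)) τ) with hρ
  have hlow : ∀ x y : Fin K, x < y → ρ y < ρ x → a ≤ (x:ℕ) ∧ a ≤ (y:ℕ) := by
    intro x y hxy hinv
    have hxy' : (x:ℕ) < y := hxy
    have hinv' : (ρ y : ℕ) < ρ x := hinv
    constructor
    · by_contra hc
      push_neg at hc
      rw [rho1_val_lt h τ x hc] at hinv'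
      rcases lt_or_ge (y:ℕ) a with hy | hy
      · rw [rho1_val_lt h τ y hy] at hinv'; omega
      · rw [rho1_val_ge h τ y hy] at hinv'; omega
    · by_contra hc
      push_neg at hc
      rw [rho1_val_lt h τ y hc] at hinv'
      rw [rho1_val_lt h τ x (by omega)] at hinv'
      omega
  refine ⟨?_, ?_, ?_⟩
  · intro i j k hij hinv hik hkj
    obtain ⟨hai, haj⟩ := hlow i j hij hinv
    have hik' : (i:ℕ) ≤ k := hik
    have hkj' : (k:ℕ) ≤ j := hkj
    have hij' : (i:ℕ) < j := hij
    have hjK : (j:ℕ) < K := j.isLt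
    have hvi := rho1_val_ge h τ i hai
    have hvj := rho1_val_ge h τ j haj
    have hvk := rho1_val_ge h τ k (by omega)
    have hinv' : (ρ j : ℕ) < ρ i := hinv
    rw [hvi, hvj] at hinv'
    have := ht1 ⟨(i:ℕ)-a, by omega⟩ ⟨(j:ℕ)-a, by omega⟩ ⟨(k:ℕ)-a, by omega⟩
      (by rw [Fin.lt_def]; simp; omega) (by rw [Fin.lt_def]; omega)
      (by rw [Fin.le_def]; simp; omega) (by rw [Fin.le_def]; simp; omega)
    simp only [] at this
    rw [hvi, hvk]
    omega
  · intro i j hij hinv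
    obtain ⟨hai, haj⟩ := hlow i j hij hinv
    have hij' : (i:ℕ) < j := hij
    have hvi := rho1_val_ge h τ i hai
    have hvj := rho1_val_ge h τ j haj
    have hinv' : (ρ j : ℕ) < ρ i := hinv
    rw [hvi, hvj] at hinv'
    have := ht2 ⟨(i:ℕ)-a, by omega⟩ ⟨(j:ℕ)-a, by omega⟩
      (by rw [Fin.lt_def]; simp; omega) (by rw [Fin.lt_def]; omega)
    simp only [] at this
    omega
  · intro i j k l hij hinv hkl hinvk hjk
    obtain ⟨hak, hal⟩ := hlow k l hkl hinvk
    have hkl' : (k:ℕ) < l := hkl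
    have hvk := rho1_val_ge h τ k hak
    have hvl := rho1_val_ge h τ l hal
    have hinv' : (ρ l : ℕ) < ρ k := hinvk
    rw [hvk, hvl] at hinv'
    have := ht2 ⟨(k:ℕ)-a, by omega⟩ ⟨(l:ℕ)-a, by omega⟩
      (by rw [Fin.lt_def]; simp; omega) (by rw [Fin.lt_def]; omega)
    simp only [] at this
    omega

lemma rho2_conds (h : a + 3 + c = K) (τ : Equiv.Perm (Fin c))
    (ht1 : Cond1 τ) (ht2 : Cond2' τ) :
    Cond1 ((finCongr h).permCongr (dsum (dsum (Equiv.refl (Fin a)) perm321) τ))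
    ∧ Cond2 ((finCongr h).permCongr (dsum (dsum (Equiv.refl (Fin a)) perm321) τ))
    ∧ Cond3 ((finCongr h).permCongr (dsum (dsum (Equiv.refl (Fin a)) perm321) τ)) := by
  set ρ := (finCongr h).permCongr (dsum (dsum (Equiv.refl (Fin a)) perm321) τ) with hρ
  have key : ∀ x y : Fin K, x < y → ρ y < ρ x →
      (a ≤ (x:ℕ) ∧ (y:ℕ) < a + 3) ∨ (a + 3 ≤ (x:ℕ)) := by
    intro x y hxy hinv
    have hxy' : (x:ℕ) < y := hxy
    have hinv' : (ρ y : ℕ) < ρ x := hinv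
    have hax : a ≤ (x:ℕ) := by
      by_contra hc
      push_neg at hc
      rw [rho2_val_lt h τ x hc] at hinv'
      rcases lt_or_ge (y:ℕ) a with hy | hy
      · rw [rho2_val_lt h τ y hy] at hinv'; omega
      · rcases lt_or_ge (y:ℕ) (a+3) with hy2 | hy2
        · rw [rho2_val_mid h τ y hy hy2] at hinv'; omega
        · rw [rho2_val_ge h τ y hy2] at hinv'; omega
    rcases lt_or_ge (x:ℕ) (a+3) with hx2 | hx2
    · left
      refine ⟨hax, ?_⟩
      by_contra hc
      push_neg at hc
      rw [rho2_val_mid h τ x hax hx2, rho2_val_ge h τ y hc] at hinv'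
      omega
    · right; exact hx2
  refine ⟨?_, ?_, ?_⟩
  · intro i j k hij hinv hik hkj
    have hik' : (i:ℕ) ≤ k := hik
    have hkj' : (k:ℕ) ≤ j := hkj
    have hij' : (i:ℕ) < j := hij
    have hjK : (j:ℕ) < K := j.isLt
    have hinv' : (ρ j : ℕ) < ρ i := hinv
    rcases key i j hij hinv with ⟨hai, haj⟩ | hhi
    · rw [rho2_val_mid h τ i hai (by omega), rho2_val_mid h τ k (by omega) (by omega)]
      omega
    · have hvi := rho2_val_ge h τ i hhi
      have hvj := rho2_val_ge h τ j (by omega)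
      have hvk := rho2_val_ge h τ k (by omega)
      rw [hvi, hvj] at hinv'
      have := ht1 ⟨(i:ℕ)-(a+3), by omega⟩ ⟨(j:ℕ)-(a+3), by omega⟩ ⟨(k:ℕ)-(a+3), by omega⟩
        (by rw [Fin.lt_def]; simp; omega) (by rw [Fin.lt_def]; omega)
        (by rw [Fin.le_def]; simp; omega) (by rw [Fin.le_def]; simp; omega)
      simp only [] at this
      rw [hvi, hvk]
      omega
  · intro i j hij hinv
    have hij' : (i:ℕ) < j := hij
    have hinv' : (ρ j : ℕ) < ρ i := hinv
    rcases key i j hij hinv with ⟨hai, haj⟩ | hhi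
    · omega
    · have hvi := rho2_val_ge h τ i hhi
      have hvj := rho2_val_ge h τ j (by omega)
      rw [hvi, hvj] at hinv'
      have := ht2 ⟨(i:ℕ)-(a+3), by omega⟩ ⟨(j:ℕ)-(a+3), by omega⟩
        (by rw [Fin.lt_def]; simp; omega) (by rw [Fin.lt_def]; omega)
      simp only [] at this
      omega
  · intro i j k l hij hinv hkl hinvk hjk
    have hij' : (i:ℕ) < j := hij
    have hkl' : (k:ℕ) < l := hkl
    have hinv' : (ρ l : ℕ) < ρ k := hinvk
    rcases key k l hkl hinvk with ⟨hak, hal⟩ | hhk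
    · rcases key i j hij hinv with ⟨hai, haj⟩ | hhi <;> omega
    · have hvk := rho2_val_ge h τ k hhk
      have hvl := rho2_val_ge h τ l (by omega)
      rw [hvk, hvl] at hinv'
      have := ht2 ⟨(k:ℕ)-(a+3), by omega⟩ ⟨(l:ℕ)-(a+3), by omega⟩
        (by rw [Fin.lt_def]; simp; omega) (by rw [Fin.lt_def]; omega)
      simp only [] at this
      omega

end RhoConds

section Tail
variable {N b : ℕ}

lemma inv_bound (P : Equiv.Perm (Fin N)) (H : ∀ x : Fin N, b ≤ (x:ℕ) → b ≤ ((P x : Fin N):ℕ)) :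
    ∀ x : Fin N, b ≤ (x:ℕ) → b ≤ ((P⁻¹ x : Fin N):ℕ) := by
  intro x hx
  set S : Finset (Fin N) := univ.filter (fun y => b ≤ (y:ℕ)) with hS
  have hsub : S.image P ⊆ S := by
    intro z hz
    simp only [hS, Finset.mem_image, Finset.mem_filter, Finset.mem_univ, true_and] at *
    obtain ⟨y, hy, rfl⟩ := hz
    exact H y hy
  have hcard : (S.image P).card = S.card := Finset.card_image_of_injective _ P.injective
  have heq : S.image P = S := Finset.eq_of_subset_of_card_le hsub (le_of_eq hcard.symm)
  have hxS : x ∈ S := by simp [hS, hx]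
  rw [← heq] at hxS
  obtain ⟨y, hyS, hyx⟩ := Finset.mem_image.mp hxS
  have hPy : P⁻¹ x = y := by rw [← hyx]; simp
  rw [hPy]
  simp only [hS, Finset.mem_filter] at hyS
  exact hyS.2

def tailPerm (P : Equiv.Perm (Fin N)) (hb : b ≤ N)
    (H : ∀ x : Fin N, b ≤ (x:ℕ) → b ≤ ((P x : Fin N):ℕ)) : Equiv.Perm (Fin (N - b)) where
  toFun x := ⟨((P ⟨b + (x:ℕ), by omega⟩ : Fin N) : ℕ) - b, by
    have h1 := H ⟨b + (x:ℕ), by omega⟩ (by simp)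
    have h2 := (P ⟨b + (x:ℕ), by omega⟩).isLt
    omega⟩
  invFun x := ⟨((P⁻¹ ⟨b + (x:ℕ), by omega⟩ : Fin N) : ℕ) - b, by
    have h1 := inv_bound P H ⟨b + (x:ℕ), by omega⟩ (by simp)
    have h2 := (P⁻¹ ⟨b + (x:ℕ), by omega⟩).isLt
    omega⟩
  left_inv := by
    intro x
    apply Fin.ext
    simp only []
    have gen : ∀ (z : Fin N) (hz : b ≤ (z:ℕ)) (hh : b + ((z:ℕ) - b) < N),
        (⟨b + ((z:ℕ) - b), hh⟩ : Fin N) = z := fun z hz hh => Fin.ext (by simp; omega)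
    rw [gen (P ⟨b + (x:ℕ), by omega⟩) (H _ (by simp))]
    rw [show ∀ y, P⁻¹ (P y) = y from fun y => P.symm_apply_apply y]
    simp
  right_inv := by
    intro x
    apply Fin.ext
    simp only []
    have gen : ∀ (z : Fin N) (hz : b ≤ (z:ℕ)) (hh : b + ((z:ℕ) - b) < N),
        (⟨b + ((z:ℕ) - b), hh⟩ : Fin N) = z := fun z hz hh => Fin.ext (by simp; omega)
    rw [gen (P⁻¹ ⟨b + (x:ℕ), by omega⟩) (inv_bound P H _ (by simp))]
    rw [show ∀ y, P (P⁻¹ y) = y from fun y => P.apply_symm_apply y]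
    simp

lemma tailPerm_val (P : Equiv.Perm (Fin N)) (hb : b ≤ N)
    (H : ∀ x : Fin N, b ≤ (x:ℕ) → b ≤ ((P x : Fin N):ℕ))
    (x : Fin (N - b)) (y : Fin N) (hy : (y:ℕ) = b + (x:ℕ)) :
    ((tailPerm P hb H) x : ℕ) + b = ((P y : Fin N) : ℕ) := by
  have hyx : y = ⟨b + (x:ℕ), by omega⟩ := Fin.ext hy
  rw [hyx]
  simp only [tailPerm, Equiv.coe_fn_mk]
  have h1 := H ⟨b + (x:ℕ), by omega⟩ (by simp)
  omega

lemma tail_conds (P : Equiv.Perm (Fin N)) (hb : b ≤ N)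
    (H : ∀ x : Fin N, b ≤ (x:ℕ) → b ≤ ((P x : Fin N):ℕ))
    (hc1 : Cond1 P)
    (hno2 : ∀ k l : Fin N, b ≤ (k:ℕ) → k < l → P l < P k → (l:ℕ) ≤ (k:ℕ)+1) :
    Cond1 (tailPerm P hb H) ∧ Cond2' (tailPerm P hb H) := by
  constructor
  · intro i j k hij hinv hik hkj
    have hij' : (i:ℕ) < j := hij
    have hik' : (i:ℕ) ≤ k := hik
    have hkj' : (k:ℕ) ≤ j := hkj
    have hjN : (j:ℕ) < N - b := j.isLt
    obtain ⟨i', hie⟩ : ∃ i' : Fin N, (i':ℕ) = b + (i:ℕ) := ⟨⟨b + (i:ℕ), by omega⟩, rfl⟩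
    obtain ⟨j', hje⟩ : ∃ j' : Fin N, (j':ℕ) = b + (j:ℕ) := ⟨⟨b + (j:ℕ), by omega⟩, rfl⟩
    obtain ⟨k', hke⟩ : ∃ k' : Fin N, (k':ℕ) = b + (k:ℕ) := ⟨⟨b + (k:ℕ), by omega⟩, rfl⟩
    have hvi := tailPerm_val P hb H i i' hie
    have hvj := tailPerm_val P hb H j j' hje
    have hvk := tailPerm_val P hb H k k' hke
    have hinv' : ((tailPerm P hb H) j : ℕ) < (tailPerm P hb H) i := hinv
    have hPinv : P j' < P i' := Fin.lt_def.mpr (by omega)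
    have := hc1 i' j' k' (Fin.lt_def.mpr (by omega)) hPinv
      (Fin.le_def.mpr (by omega)) (Fin.le_def.mpr (by omega))
    omega
  · intro i j hij hinv
    have hij' : (i:ℕ) < j := hij
    have hjN : (j:ℕ) < N - b := j.isLt
    obtain ⟨i', hie⟩ : ∃ i' : Fin N, (i':ℕ) = b + (i:ℕ) := ⟨⟨b + (i:ℕ), by omega⟩, rfl⟩
    obtain ⟨j', hje⟩ : ∃ j' : Fin N, (j':ℕ) = b + (j:ℕ) := ⟨⟨b + (j:ℕ), by omega⟩, rfl⟩
    have hvi := tailPerm_val P hb H i i' hie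
    have hvj := tailPerm_val P hb H j j' hje
    have hinv' : ((tailPerm P hb H) j : ℕ) < (tailPerm P hb H) i := hinv
    have hPinv : P j' < P i' := Fin.lt_def.mpr (by omega)
    have := hno2 i' j' (by omega) (Fin.lt_def.mpr (by omega)) hPinv
    omega

end Tail

section Forward
variable {N : ℕ} {P : Equiv.Perm (Fin N)}

lemma uniq2 (hc1 : Cond1 P) (hc2 : Cond2 P) (hc3 : Cond3 P)
    {i0 j0 k l : Fin N} (h0 : i0 < j0) (hinv0 : P j0 < P i0) (hj0 : (j0:ℕ) = (i0:ℕ)+2)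
    (hk : k < l) (hinvk : P l < P k) (hl : (l:ℕ) = (k:ℕ)+2) : (k:ℕ) = (i0:ℕ) := by
  by_contra hne
  have h0' : (i0:ℕ) < j0 := h0
  have hk' : (k:ℕ) < l := hk
  have hinv0' : (P j0 : ℕ) < P i0 := hinv0
  have hinvk' : (P l : ℕ) < P k := hinvk
  have hjN : (j0:ℕ) < N := j0.isLt
  have hlN : (l:ℕ) < N := l.isLt
  have hPj0 := hc1 i0 j0 j0 h0 hinv0 (le_of_lt h0) (le_refl _)
  have hPl := hc1 k l l hk hinvk (le_of_lt hk) (le_refl _)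
  obtain ⟨m0, hm0⟩ : ∃ m : Fin N, (m:ℕ) = (i0:ℕ)+1 := ⟨⟨(i0:ℕ)+1, by omega⟩, rfl⟩
  obtain ⟨mk, hmk⟩ : ∃ m : Fin N, (m:ℕ) = (k:ℕ)+1 := ⟨⟨(k:ℕ)+1, by omega⟩, rfl⟩
  have hPm0 := hc1 i0 j0 m0 h0 hinv0 (Fin.le_def.mpr (by omega)) (Fin.le_def.mpr (by omega))
  have hPmk := hc1 k l mk hk hinvk (Fin.le_def.mpr (by omega)) (Fin.le_def.mpr (by omega))
  rcases lt_trichotomy ((k:ℕ)) ((i0:ℕ)) with hlt | heq | hgt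
  · -- k < i0
    rcases Nat.lt_or_ge ((k:ℕ)+2) ((i0:ℕ)) with hA | hB
    · have := hc3 k l i0 j0 hk hinvk h0 hinv0 (by omega)
      omega
    · -- k+1 = i0 or k+2 = i0
      rcases Nat.eq_or_lt_of_le hB with hB1 | hB2
      · -- k + 2 = i0, so l = i0
        have hli0 : l = i0 := Fin.ext (by omega)
        rw [hli0] at hinvk'
        -- P j0 < P i0 < P k : inversion (k, j0) of span 4
        have := hc2 k j0 (Fin.lt_def.mpr (by omega)) (Fin.lt_def.mpr (by omega))
        omega
      · -- k + 1 = i0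
        have hmi0 : mk = i0 := Fin.ext (by omega)
        rw [hmi0] at hPmk
        -- P i0 + 1 = P k ; P j0 < P i0 so inversion (k, j0) span 3
        have := hc2 k j0 (Fin.lt_def.mpr (by omega)) (Fin.lt_def.mpr (by omega))
        omega
  · exact hne heq
  · -- i0 < k
    rcases Nat.lt_or_ge ((i0:ℕ)+2) ((k:ℕ)) with hA | hB
    · have := hc3 i0 j0 k l h0 hinv0 hk hinvk (by omega)
      omega
    · rcases Nat.eq_or_lt_of_le hB with hB1 | hB2
      · -- k = i0 + 2 = j0
        have hkj0 : k = j0 := Fin.ext (by omega)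
        rw [hkj0] at hinvk'
        have := hc2 i0 l (Fin.lt_def.mpr (by omega)) (Fin.lt_def.mpr (by omega))
        omega
      · -- k = i0 + 1
        have hkm0 : k = m0 := Fin.ext (by omega)
        rw [hkm0] at hinvk'
        have := hc2 i0 l (Fin.lt_def.mpr (by omega)) (Fin.lt_def.mpr (by omega))
        omega

lemma noinv_below (hc1 : Cond1 P) (hc2 : Cond2 P) (hc3 : Cond3 P)
    {i0 j0 : Fin N} (h0 : i0 < j0) (hinv0 : P j0 < P i0) (hj0 : (j0:ℕ) = (i0:ℕ)+2) :
    ∀ x y : Fin N, x < y → P y < P x → (i0:ℕ) ≤ (x:ℕ) := by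
  intro x y hxy hinv
  by_contra hc
  push_neg at hc
  have hxy' : (x:ℕ) < y := hxy
  have hinv' : (P y : ℕ) < P x := hinv
  have h0' : (i0:ℕ) < j0 := h0
  have hspan := hc2 x y hxy hinv
  rcases Nat.eq_or_lt_of_le hspan with h2 | h2
  · exact absurd (uniq2 hc1 hc2 hc3 h0 hinv0 hj0 hxy hinv h2) (by omega)
  · -- y ≤ x + 1, so y = x + 1
    rcases Nat.lt_or_ge ((y:ℕ)) ((i0:ℕ)) with hA | hB
    · have := hc3 x y i0 j0 hxy hinv h0 hinv0 hA
      omega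
    · -- y = i0 (since y = x+1, x < i0 ≤ y)
      have hyi0 : y = i0 := Fin.ext (by omega)
      rw [hyi0] at hinv'
      have := hc2 x j0 (Fin.lt_def.mpr (by omega)) (Fin.lt_def.mpr (by omega))
      omega

lemma fixed_below (hc1 : Cond1 P) (hc2 : Cond2 P) (hc3 : Cond3 P)
    {i0 j0 : Fin N} (h0 : i0 < j0) (hinv0 : P j0 < P i0) (hj0 : (j0:ℕ) = (i0:ℕ)+2) :
    ∀ x : Fin N, (x:ℕ) < (i0:ℕ) → (P x : ℕ) = x := by
  intro x hx
  apply eq_self_of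
  intro y
  constructor
  · intro h
    by_contra hcy
    push_neg at hcy
    have hne : y ≠ x := fun he => absurd (he ▸ h) (lt_irrefl _)
    have hxy : x < y := lt_of_le_of_ne hcy (Ne.symm hne)
    have := noinv_below hc1 hc2 hc3 h0 hinv0 hj0 x y hxy h
    omega
  · intro h
    by_contra hcy
    have hne : x ≠ y := fun he => absurd (he ▸ h) (lt_irrefl _)
    have h2 : P x < P y := flip_lt (Ne.symm hne) hcy
    have := noinv_below hc1 hc2 hc3 h0 hinv0 hj0 y x h h2
    have h' : (y:ℕ) < x := h
    omega

end Forward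

section Forward2
variable {N : ℕ} {P : Equiv.Perm (Fin N)}

lemma Pi0_val (hc1 : Cond1 P) (hc2 : Cond2 P) (hc3 : Cond3 P)
    {i0 j0 : Fin N} (h0 : i0 < j0) (hinv0 : P j0 < P i0) (hj0 : (j0:ℕ) = (i0:ℕ)+2) :
    (P i0 : ℕ) = (i0:ℕ) + 2 := by
  have h0' : (i0:ℕ) < j0 := h0
  have hinv0' : (P j0 : ℕ) < P i0 := hinv0
  have hjN : (j0:ℕ) < N := j0.isLt
  obtain ⟨m0, hm0⟩ : ∃ m : Fin N, (m:ℕ) = (i0:ℕ)+1 := ⟨⟨(i0:ℕ)+1, by omega⟩, rfl⟩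
  have hPm0 := hc1 i0 j0 m0 h0 hinv0 (Fin.le_def.mpr (by omega)) (Fin.le_def.mpr (by omega))
  have hPj0 := hc1 i0 j0 j0 h0 hinv0 (le_of_lt h0) (le_refl _)
  have hge : (i0:ℕ) ≤ P i0 := by
    by_contra hcc
    push_neg at hcc
    obtain ⟨z, hz⟩ : ∃ z : Fin N, (z:ℕ) = ((P i0 : Fin N):ℕ) := ⟨⟨_, (P i0).isLt⟩, rfl⟩
    have hfz := fixed_below hc1 hc2 hc3 h0 hinv0 hj0 z (by omega)
    have : z = i0 := P.injective (Fin.ext (by omega))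
    omega
  rw [val_eq_card i0]
  have hset : (univ.filter fun y => P y < P i0) = insert m0 (insert j0 (Finset.Iio i0)) := by
    ext y
    simp only [Finset.mem_filter, Finset.mem_univ, true_and, Finset.mem_insert, Finset.mem_Iio]
    constructor
    · intro hy
      have hy' : ((P y : Fin N):ℕ) < P i0 := hy
      by_contra hcc
      push_neg at hcc
      obtain ⟨hne1, hne2, hge3⟩ := hcc
      have hge3' : (i0:ℕ) ≤ y := hge3
      have hyne0 : y ≠ i0 := fun he => absurd (he ▸ hy) (lt_irrefl _)
      have hyval : (i0:ℕ)+3 ≤ (y:ℕ) := by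
        have e1 : (y:ℕ) ≠ i0 := fun he => hyne0 (Fin.ext he)
        have e2 : (y:ℕ) ≠ (m0:ℕ) := fun he => hne1 (Fin.ext he)
        have e3 : (y:ℕ) ≠ (j0:ℕ) := fun he => hne2 (Fin.ext he)
        omega
      have := hc2 i0 y (Fin.lt_def.mpr (by omega)) hy
      omega
    · intro hy
      rcases hy with rfl | rfl | hlt
      · exact Fin.lt_def.mpr (by omega)
      · exact hinv0
      · have := fixed_below hc1 hc2 hc3 h0 hinv0 hj0 y (Fin.lt_def.mp hlt)
        exact Fin.lt_def.mpr (by omega)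
  rw [hset, Finset.card_insert_of_notMem (by
      simp only [Finset.mem_insert, Finset.mem_Iio, not_or]
      constructor
      · intro he; rw [Fin.ext_iff] at he; omega
      · rw [Fin.lt_def]; omega),
    Finset.card_insert_of_notMem (by rw [Finset.mem_Iio, Fin.lt_def]; omega),
    Fin.card_Iio]

lemma tail_bound (hc1 : Cond1 P) (hc2 : Cond2 P) (hc3 : Cond3 P)
    {i0 j0 : Fin N} (h0 : i0 < j0) (hinv0 : P j0 < P i0) (hj0 : (j0:ℕ) = (i0:ℕ)+2) :
    ∀ x : Fin N, (i0:ℕ)+3 ≤ (x:ℕ) → (i0:ℕ)+3 ≤ ((P x : Fin N):ℕ) := by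
  intro x hx
  by_contra hcc
  push_neg at hcc
  have h0' : (i0:ℕ) < j0 := h0
  have hinv0' : (P j0 : ℕ) < P i0 := hinv0
  have hjN : (j0:ℕ) < N := j0.isLt
  obtain ⟨m0, hm0⟩ : ∃ m : Fin N, (m:ℕ) = (i0:ℕ)+1 := ⟨⟨(i0:ℕ)+1, by omega⟩, rfl⟩
  have hPm0 := hc1 i0 j0 m0 h0 hinv0 (Fin.le_def.mpr (by omega)) (Fin.le_def.mpr (by omega))
  have hPj0 := hc1 i0 j0 j0 h0 hinv0 (le_of_lt h0) (le_refl _)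
  have hPi0 := Pi0_val hc1 hc2 hc3 h0 hinv0 hj0
  have hinj : ∀ z : Fin N, ((P z : Fin N):ℕ) = ((P x : Fin N):ℕ) → z = x :=
    fun z h => P.injective (Fin.ext h)
  rcases Nat.lt_or_ge ((P x : Fin N):ℕ) ((i0:ℕ)) with hA | hB
  · obtain ⟨z, hz⟩ : ∃ z : Fin N, (z:ℕ) = ((P x : Fin N):ℕ) := ⟨⟨_, (P x).isLt⟩, rfl⟩
    have hfz := fixed_below hc1 hc2 hc3 h0 hinv0 hj0 z (by omega)
    have := hinj z (by omega)
    rw [this] at hz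
    omega
  · rcases Nat.lt_trichotomy ((P x : Fin N):ℕ) ((i0:ℕ)+1) with hB1 | hB2 | hB3
    · -- P x = i0, so x = j0
      have := hinj j0 (by omega)
      omega
    · have := hinj m0 (by omega)
      omega
    · -- P x = i0 + 2
      have := hinj i0 (by omega)
      omega

end Forward2


theorem stmt5 (N : ℕ) (P : Equiv.Perm (Fin N)) :
    AvoidsAll P [[2,3,1],[3,1,2],[4,3,2,1],[2,1,5,4,3]] ↔
      ((∃ (a c : ℕ) (h : a + c = N) (τ : Equiv.Perm (Fin c)), AvoidsAll τ [[2,3,1],[3,1,2],[3,2,1]] ∧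
          P = (finCongr h).permCongr (dsum (Equiv.refl (Fin a)) τ)) ∨
        (∃ (a c : ℕ) (h : a + 3 + c = N) (τ : Equiv.Perm (Fin c)), AvoidsAll τ [[2,3,1],[3,1,2],[3,2,1]] ∧
          P = (finCongr h).permCongr (dsum (dsum (Equiv.refl (Fin a)) perm321) τ))) := by
  constructor
  · intro hav
    obtain ⟨hc1, hc2, hc3⟩ := avoids_iff_conds.mp hav
    by_cases hbig : ∃ i j : Fin N, i < j ∧ P j < P i ∧ (j:ℕ) = (i:ℕ)+2
    · obtain ⟨i0, j0, h0, hinv0, hj0⟩ := hbig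
      have hjN : (j0:ℕ) < N := j0.isLt
      have h0' : (i0:ℕ) < j0 := h0
      have hbN : (i0:ℕ)+3 ≤ N := by omega
      have H := tail_bound hc1 hc2 hc3 h0 hinv0 hj0
      right
      refine ⟨(i0:ℕ), N - ((i0:ℕ)+3), by omega, tailPerm P hbN H, ?_, ?_⟩
      · apply avoids_iff_conds'.mpr
        apply tail_conds P hbN H hc1
        intro k l hbk hkl hinvk
        have hsp := hc2 k l hkl hinvk
        rcases Nat.eq_or_lt_of_le hsp with h2 | h2
        · have := uniq2 hc1 hc2 hc3 h0 hinv0 hj0 hkl hinvk h2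
          omega
        · omega
      · apply Equiv.ext
        intro x
        apply Fin.ext
        rcases Nat.lt_or_ge (x:ℕ) ((i0:ℕ)) with hx | hx
        · rw [rho2_val_lt _ _ x hx]
          exact fixed_below hc1 hc2 hc3 h0 hinv0 hj0 x hx
        · rcases Nat.lt_or_ge (x:ℕ) ((i0:ℕ)+3) with hx2 | hx2
          · rw [rho2_val_mid _ _ x hx hx2]
            obtain ⟨m0, hm0⟩ : ∃ m : Fin N, (m:ℕ) = (i0:ℕ)+1 := ⟨⟨(i0:ℕ)+1, by omega⟩, rfl⟩
            have hPm0 := hc1 i0 j0 m0 h0 hinv0 (Fin.le_def.mpr (by omega))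
              (Fin.le_def.mpr (by omega))
            have hPj0 := hc1 i0 j0 j0 h0 hinv0 (le_of_lt h0) (le_refl _)
            have hPi0 := Pi0_val hc1 hc2 hc3 h0 hinv0 hj0
            rcases Nat.lt_trichotomy ((x:ℕ)) ((i0:ℕ)+1) with hB1 | hB2 | hB3
            · rw [show x = i0 from Fin.ext (by omega)]
              omega
            · rw [show x = m0 from Fin.ext (by omega)]
              omega
            · rw [show x = j0 from Fin.ext (by omega)]
              omega
          · rw [rho2_val_ge _ _ x hx2]
            have key : ∀ t : Fin (N - ((i0:ℕ)+3)), (t:ℕ) = (x:ℕ) - ((i0:ℕ)+3) →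
                ((P x : Fin N):ℕ) = ((i0:ℕ)+3) + ((tailPerm P hbN H) t : ℕ) := by
              intro t ht
              have := tailPerm_val P hbN H t x (by omega)
              omega
            exact key _ rfl
    · left
      refine ⟨0, N, Nat.zero_add N, P, ?_, ?_⟩
      · apply avoids_iff_conds'.mpr
        refine ⟨hc1, ?_⟩
        intro i j hij hinv
        have hsp := hc2 i j hij hinv
        rcases Nat.eq_or_lt_of_le hsp with h2 | h2
        · exact absurd ⟨i, j, hij, hinv, h2⟩ hbig
        · omega
      · apply Equiv.ext
        intro x
        apply Fin.ext
        rw [rho1_val_ge (Nat.zero_add N) P x (Nat.zero_le _)]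
        have key : ∀ t : Fin N, (t:ℕ) = (x:ℕ) - 0 → ((P x : Fin N):ℕ) = 0 + ((P t : Fin N):ℕ) := by
          intro t ht
          have hh : t = x := Fin.ext (by omega)
          rw [hh]
          omega
        exact key _ rfl
  · rintro (⟨a, c, h, τ, hτ, rfl⟩ | ⟨a, c, h, τ, hτ, rfl⟩)
    · obtain ⟨ht1, ht2⟩ := avoids_iff_conds'.mp hτ
      obtain ⟨g1, g2, g3⟩ := rho1_conds h τ ht1 ht2
      exact avoids_iff_conds.mpr ⟨g1, g2, g3⟩
    · obtain ⟨ht1, ht2⟩ := avoids_iff_conds'.mp hτ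
      obtain ⟨g1, g2, g3⟩ := rho2_conds h τ ht1 ht2
      exact avoids_iff_conds.mpr ⟨g1, g2, g3⟩
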